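/- Let b₁, …, b_{2N} ∈ ℝ³ be an exchange drive, let c ∈ ℝ³, and let 0 ≤ k ≤ 2N. Form the drive b' of length 2N+2 by inserting the two equal steps c, c after position k: b' = (b₁, …, b_k, c, c, b_{k+1}, …, b_{2N}). Then the alternating sum is unchanged, Σ_{n=1}^{2N+2} (−1)^{n+1} b'_n = Σ_{n=1}^{2N} (−1)^{n+1} b_n (so b' is a loop drive if and only if b is), and the characteristic sum is unchanged: S(b') = S(b). -/

import Mathlib

open Matrix Finset

/-- The displacement vector after `n` steps of a 3D exchange drive:
`d_n = Σ_{k=1}^{n} (−1)^{k+1} b_k`. -/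
noncomputable def disp3 (b : ℕ → Fin 3 → ℝ) (n : ℕ) : Fin 3 → ℝ :=
  ∑ k ∈ Finset.Icc 1 n, (-1 : ℝ) ^ (k + 1) • b k

/-- The characteristic sum `S(b) = Σ_{n=1}^{2N−1} (−1)ⁿ (d_n × b_{n+1})` of a 3D
exchange drive of length `2N`. -/
noncomputable def charSum (N : ℕ) (b : ℕ → Fin 3 → ℝ) : Fin 3 → ℝ :=
  ∑ n ∈ Finset.Icc 1 (2 * N - 1), (-1 : ℝ) ^ n • ((disp3 b n) ⨯₃ (b (n + 1)))

lemma neg_one_pow_two_add (m : ℕ) : (-1 : ℝ) ^ (m + 2) = (-1 : ℝ) ^ m := by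
  rw [pow_add, neg_one_sq, mul_one]

lemma disp3_zero (b : ℕ → Fin 3 → ℝ) : disp3 b 0 = 0 := by
  simp [disp3]

lemma disp3_succ (b : ℕ → Fin 3 → ℝ) (n : ℕ) :
    disp3 b (n + 1) = disp3 b n + (-1 : ℝ) ^ n • b (n + 1) := by
  unfold disp3
  rw [← Finset.Ico_add_one_right_eq_Icc, Finset.sum_Ico_succ_top (by omega), Finset.Ico_add_one_right_eq_Icc]
  congr 1
  rw [show n + 1 + 1 = n + 2 from rfl, neg_one_pow_two_add]

lemma icc_range (g : ℕ → Fin 3 → ℝ) (M : ℕ) (h0 : g 0 = 0) :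
    ∑ n ∈ Finset.Icc 1 M, g n = ∑ n ∈ Finset.range (M + 1), g n := by
  have h : Finset.range (M + 1) = insert 0 (Finset.Icc 1 M) := by
    ext x; simp; omega
  rw [h, Finset.sum_insert (by simp), h0, zero_add]

/-- Inserting the two equal steps `c, c` after position `k` of an
exchange drive `b₁, …, b_{2N}` (giving the drive
`b' = (b₁, …, b_k, c, c, b_{k+1}, …, b_{2N})` of length `2N+2`) leaves the alternating
step sum unchanged (so `b'` is a loop drive iff `b` is) and leaves the characteristic
sum unchanged: `S(b') = S(b)`. -/
theorem stmt_6 (N : ℕ) (b b' : ℕ → Fin 3 → ℝ) (c : Fin 3 → ℝ) (k : ℕ)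
    (hk : k ≤ 2 * N)
    (hb' : ∀ n, b' n = if n ≤ k then b n else if n ≤ k + 2 then c else b (n - 2)) :
    (∑ n ∈ Finset.Icc 1 (2 * N + 2), (-1 : ℝ) ^ (n + 1) • b' n
        = ∑ n ∈ Finset.Icc 1 (2 * N), (-1 : ℝ) ^ (n + 1) • b n)
    ∧ charSum (N + 1) b' = charSum N b := by
  -- basic facts about b'
  have hble : ∀ n ≤ k, b' n = b n := by
    intro n hn; rw [hb' n]; simp [hn]
  have hbc1 : b' (k + 1) = c := by rw [hb' (k + 1)]; simp
  have hbc2 : b' (k + 2) = c := by rw [hb' (k + 2)]; simp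
  have hbgt : ∀ j, b' (k + 3 + j) = b (k + 1 + j) := by
    intro j
    rw [hb' (k + 3 + j)]
    have h1 : ¬ (k + 3 + j ≤ k) := by omega
    have h2 : ¬ (k + 3 + j ≤ k + 2) := by omega
    have h3 : k + 3 + j - 2 = k + 1 + j := by omega
    simp [h1, h2, h3]
  -- displacements
  have hdle : ∀ n ≤ k, disp3 b' n = disp3 b n := by
    intro n hn
    unfold disp3
    refine Finset.sum_congr rfl ?_
    intro j hj
    simp only [Finset.mem_Icc] at hj
    rw [hble j (by omega)]
  have hd1 : disp3 b' (k + 1) = disp3 b k + (-1 : ℝ) ^ k • c := by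
    rw [disp3_succ, hdle k le_rfl, hbc1]
  have hd2 : ∀ j, disp3 b' (k + 2 + j) = disp3 b (k + j) := by
    intro j
    induction j with
    | zero =>
        simp only [Nat.add_zero]
        show disp3 b' (k + 1 + 1) = _
        rw [disp3_succ, hd1]
        have : b' (k + 1 + 1) = c := hbc2
        rw [this]
        have hsgn : (-1 : ℝ) ^ (k + 1) = -(-1 : ℝ) ^ k := by
          rw [pow_succ]; ring
        rw [hsgn, neg_smul]
        rw [add_assoc]
        simp
    | succ j ih =>
        have he : k + 2 + (j + 1) = (k + 2 + j) + 1 := by omega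
        rw [he, disp3_succ, ih]
        have hbx : b' (k + 2 + j + 1) = b (k + 1 + j) := by
          have : k + 2 + j + 1 = k + 3 + j := by omega
          rw [this, hbgt j]
        rw [hbx]
        have he2 : k + (j + 1) = (k + j) + 1 := by omega
        rw [he2, disp3_succ]
        have hsgn : (-1 : ℝ) ^ (k + 2 + j) = (-1 : ℝ) ^ (k + j) := by
          rw [show k + 2 + j = (k + j) + 2 by omega, neg_one_pow_two_add]
        rw [hsgn, show k + 1 + j = k + j + 1 by omega]
  -- part 1
  have part1 : (∑ n ∈ Finset.Icc 1 (2 * N + 2), (-1 : ℝ) ^ (n + 1) • b' n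
      = ∑ n ∈ Finset.Icc 1 (2 * N), (-1 : ℝ) ^ (n + 1) • b n) := by
    have h1 : (∑ n ∈ Finset.Icc 1 (2 * N + 2), (-1 : ℝ) ^ (n + 1) • b' n)
        = disp3 b' (2 * N + 2) := rfl
    have h2 : (∑ n ∈ Finset.Icc 1 (2 * N), (-1 : ℝ) ^ (n + 1) • b n)
        = disp3 b (2 * N) := rfl
    rw [h1, h2]
    have := hd2 (2 * N - k)
    have e1 : k + 2 + (2 * N - k) = 2 * N + 2 := by omega
    have e2 : k + (2 * N - k) = 2 * N := by omega
    rwa [e1, e2] at this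
  refine ⟨part1, ?_⟩
  -- part 2
  set f : ℕ → Fin 3 → ℝ := fun n => (-1 : ℝ) ^ n • ((disp3 b n) ⨯₃ (b (n + 1))) with hf
  set f' : ℕ → Fin 3 → ℝ := fun n => (-1 : ℝ) ^ n • ((disp3 b' n) ⨯₃ (b' (n + 1))) with hf'
  have hf0 : f 0 = 0 := by simp [hf, disp3_zero]
  have hf'0 : f' 0 = 0 := by simp [hf', disp3_zero]
  have hL : charSum (N + 1) b' = ∑ n ∈ Finset.range (2 * N + 2), f' n := by
    unfold charSum
    have h : 2 * (N + 1) - 1 = 2 * N + 1 := by omega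
    rw [h, icc_range f' (2 * N + 1) hf'0]
  have hR : charSum N b = ∑ n ∈ Finset.range (2 * N), f n := by
    unfold charSum
    rcases Nat.eq_zero_or_pos N with h | h
    · subst h; simp
    · have h2 : 2 * N - 1 + 1 = 2 * N := by omega
      rw [icc_range f (2 * N - 1) hf0, h2]
  rw [hL, hR]
  obtain ⟨M, hM⟩ : ∃ M, 2 * N = k + M := ⟨2 * N - k, by omega⟩
  rw [hM]
  have hsplitL : ∑ n ∈ Finset.range (k + M + 2), f' n
      = ∑ n ∈ Finset.range k, f' n + ∑ x ∈ Finset.range (M + 2), f' (k + x) := by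
    rw [show k + M + 2 = k + (M + 2) by omega]
    exact Finset.sum_range_add f' k (M + 2)
  have hsplitR : ∑ n ∈ Finset.range (k + M), f n
      = ∑ n ∈ Finset.range k, f n + ∑ x ∈ Finset.range M, f (k + x) :=
    Finset.sum_range_add f k M
  rw [hsplitL, hsplitR]
  have heq1 : ∀ n ∈ Finset.range k, f' n = f n := by
    intro n hn
    simp only [Finset.mem_range] at hn
    simp only [hf, hf']
    rw [hdle n (by omega), hble (n + 1) (by omega)]
  rw [Finset.sum_congr rfl heq1]
  congr 1
  -- remaining: ∑ j < M+2, f' (k+j) = ∑ j < M, f (k+j)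
  rw [show M + 2 = (M + 1) + 1 from rfl]
  rw [Finset.sum_range_succ' (fun j => f' (k + j)) (M + 1),
    Finset.sum_range_succ' (fun j => f' (k + (j + 1))) M]
  have hmid : ∀ j, f' (k + (j + 1 + 1)) = f (k + j) := by
    intro j
    simp only [hf, hf']
    have e : k + (j + 1 + 1) = k + 2 + j := by omega
    rw [e, hd2 j]
    have eb : b' (k + 2 + j + 1) = b (k + j + 1) := by
      have h1 : k + 2 + j + 1 = k + 3 + j := by omega
      have h2 : k + 1 + j = k + j + 1 := by omega
      rw [h1, hbgt j, h2]
    rw [eb]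
    have hsgn : (-1 : ℝ) ^ (k + 2 + j) = (-1 : ℝ) ^ (k + j) := by
      rw [show k + 2 + j = (k + j) + 2 by omega, neg_one_pow_two_add]
    rw [hsgn]
  rw [Finset.sum_congr rfl (fun j _ => hmid j)]
  -- now cancel the two middle terms
  have hcancel : f' (k + (0 + 1)) + f' (k + 0) = 0 := by
    simp only [hf', Nat.add_zero, Nat.zero_add]
    rw [hd1, hdle k le_rfl, hbc1, hbc2]
    have hcross : (disp3 b k + (-1 : ℝ) ^ k • c) ⨯₃ c
        = disp3 b k ⨯₃ c := by
      rw [LinearMap.map_add, LinearMap.add_apply, LinearMap.map_smul,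
        LinearMap.smul_apply, cross_self, smul_zero, add_zero]
    rw [hcross]
    have hsgn : (-1 : ℝ) ^ (k + 1) = -(-1 : ℝ) ^ k := by rw [pow_succ]; ring
    rw [hsgn, neg_smul]
    abel
  rw [add_assoc, hcancel, add_zero]
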